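/- Univariate iterated pre-Lie products: let h = Σ_{n≥1} h_n x^n be a one-variable series with zero constant term, and define R^{(0)}(h) := h and R^{(n)}(h) := R^{(n−1)}(h) ◁ h. Then for every n ≥ 1 and k ≥ n, the coefficient of x^k in R^{(n−1)}(h) equals Σ_{i_1+⋯+i_n=k, i_j≥1} (i_1+1)(i_1+i_2+1)⋯(i_1+⋯+i_{n−1}+1)·h_{i_1}⋯h_{i_n} (the empty product for n = 1 being 1), and it vanishes for k < n. -/

import Mathlib

open PowerSeries

variable {A : Type*}

/-- The univariate pre-Lie product, the bilinear extension to series with zero constant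
term of the insertion product on monomials `x^a ◁ x^b = Σ_{k=0}^{a} x^k x^b x^{a−k}
= (a+1)·x^{a+b}`. -/
noncomputable def triPS [CommRing A] (f g : PowerSeries A) : PowerSeries A :=
  PowerSeries.mk fun k =>
    ∑ p ∈ Finset.HasAntidiagonal.antidiagonal k, ((p.1 : A) + 1) * coeff p.1 f * coeff p.2 g

/-- Iterated right pre-Lie powers: `RPS h 0 = h = R^{(0)}(h)`, `RPS h n = R^{(n)}(h)`. -/
noncomputable def RPS [CommRing A] (h : PowerSeries A) : ℕ → PowerSeries A
  | 0 => h
  | n + 1 => triPS (RPS h n) h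

/-- The weight `(i_1+1)(i_1+i_2+1)⋯(i_1+⋯+i_{n−1}+1)` of a composition `(i_1,…,i_n)`
(the empty product, for `n = 1`, being `1`). -/
def weight [CommRing A] {k : ℕ} (c : Composition k) : A :=
  ∏ j ∈ Finset.range (c.length - 1), ((c.sizeUpTo (j + 1) : A) + 1)

/-- The product `h_{i_1}⋯h_{i_n}` over the parts of a composition `(i_1,…,i_n)`. -/
noncomputable def prodH [CommRing A] (h : PowerSeries A) {k : ℕ} (c : Composition k) : A :=
  (c.blocks.map fun i => coeff i h).prod

/-- Append a last block `b` to a composition of `a`, yielding a composition of `k = a + b`. -/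
def mkComp {a b k : ℕ} (hab : a + b = k) (hb : 0 < b) (c : Composition a) : Composition k :=
  ⟨c.blocks ++ [b], by
    intro i hi
    rcases List.mem_append.1 hi with h1 | h1
    · exact c.blocks_pos h1
    · simp at h1; omega, by
    simp [c.blocks_sum, hab]⟩

lemma key [CommRing A] (h : PowerSeries A) (hh : coeff 0 h = 0) :
    ∀ n, 1 ≤ n → ∀ k, coeff k (RPS h (n - 1)) =
      ∑ c ∈ Finset.univ.filter (fun c : Composition k => c.length = n),
        weight c * prodH h c := by
  intro n hn
  induction n, hn using Nat.le_induction with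
  | base =>
    intro k
    show coeff k h = _
    cases k with
    | zero =>
      rw [hh]
      symm
      apply Finset.sum_eq_zero
      intro c hc
      exfalso
      have := c.length_le
      have := (Finset.mem_filter.1 hc).2
      omega
    | succ m =>
      have hk : 0 < m + 1 := Nat.succ_pos m
      have : Finset.univ.filter (fun c : Composition (m+1) => c.length = 1)
          = {Composition.single (m+1) hk} := by
        ext c
        simp [Composition.eq_single_iff_length hk]
      rw [this, Finset.sum_singleton, weight, prodH]
      simp [Composition.single_length, Composition.single_blocks]
  | succ n hn IH =>
    intro k
    obtain ⟨m, rfl⟩ : ∃ m, n = m + 1 := ⟨n - 1, by omega⟩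
    show coeff k (triPS (RPS h m) h) = _
    rw [triPS, coeff_mk]
    have step1 : ∀ p ∈ Finset.HasAntidiagonal.antidiagonal k,
        ((p.1 : A) + 1) * coeff p.1 (RPS h m) * coeff p.2 h
          ≠ 0 → 0 < p.2 := by
      intro p _ hne
      rcases Nat.eq_zero_or_pos p.2 with h0 | h0
      · exact absurd (by rw [h0, hh, mul_zero]) hne
      · exact h0
    rw [← Finset.sum_filter_of_ne step1]
    have step2 : ∀ p ∈ (Finset.HasAntidiagonal.antidiagonal k).filter (fun p => 0 < p.2),
        ((p.1 : A) + 1) * coeff p.1 (RPS h m) * coeff p.2 h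
        = ∑ c ∈ Finset.univ.filter (fun c : Composition p.1 => c.length = m + 1),
            ((p.1 : A) + 1) * (weight c * prodH h c) * coeff p.2 h := by
      intro p _
      have := IH p.1
      simp only [Nat.add_sub_cancel] at this
      rw [this, Finset.mul_sum, Finset.sum_mul]
    rw [Finset.sum_congr rfl step2, Finset.sum_sigma']
    refine Finset.sum_bij
      (fun x hx => mkComp (Finset.HasAntidiagonal.mem_antidiagonal.1
          (Finset.mem_filter.1 (Finset.mem_sigma.1 hx).1).1)
          (Finset.mem_filter.1 (Finset.mem_sigma.1 hx).1).2 x.2)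
      ?_ ?_ ?_ ?_
    · -- maps into
      intro x hx
      have hlen := (Finset.mem_filter.1 (Finset.mem_sigma.1 hx).2).2
      simp only [Finset.mem_filter, Finset.mem_univ, true_and]
      show (x.2.blocks ++ [x.1.2]).length = m + 1 + 1
      simp [Composition.blocks_length, hlen]
    · -- injective
      intro x1 hx1 x2 hx2 heq
      have hlen1 := (Finset.mem_filter.1 (Finset.mem_sigma.1 hx1).2).2
      have hlen2 := (Finset.mem_filter.1 (Finset.mem_sigma.1 hx2).2).2
      have hb : x1.2.blocks ++ [x1.1.2] = x2.2.blocks ++ [x2.1.2] :=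
        congrArg Composition.blocks heq
      have hl : x1.2.blocks.length = x2.2.blocks.length := by
        simp [Composition.blocks_length, hlen1, hlen2]
      obtain ⟨hbl, hbb⟩ := List.append_inj hb (by exact hl)
      have hb2 : x1.1.2 = x2.1.2 := by simpa using hbb
      have ha : x1.1.1 = x2.1.1 := by
        rw [← x1.2.blocks_sum, ← x2.2.blocks_sum, hbl]
      obtain ⟨⟨a1, b1⟩, c1⟩ := x1
      obtain ⟨⟨a2, b2⟩, c2⟩ := x2
      simp only at hb2 ha
      subst ha; subst hb2
      exact congrArg (Sigma.mk (a1, b1)) (Composition.ext hbl)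
    · -- surjective
      intro c' hc'
      have hlen := (Finset.mem_filter.1 hc').2
      have hne : c'.blocks ≠ [] := by
        intro hcon
        have : c'.blocks.length = m + 2 := hlen
        rw [hcon] at this; simp at this
      set b := c'.blocks.getLast hne with hbdef
      set l := c'.blocks.dropLast with hldef
      have hsplit : l ++ [b] = c'.blocks := List.dropLast_append_getLast hne
      have hbpos : 0 < b := c'.blocks_pos (List.getLast_mem hne)
      have hsum : l.sum + b = k := by
        have := c'.blocks_sum
        rw [← hsplit] at this
        simpa using this
      have hlpos : ∀ i ∈ l, 0 < i := fun i hi =>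
        c'.blocks_pos (List.dropLast_subset _ hi)
      refine ⟨⟨(l.sum, b), ⟨l, fun hi => hlpos _ hi, rfl⟩⟩, ?_, ?_⟩
      · rw [Finset.mem_sigma]
        constructor
        · rw [Finset.mem_filter]
          exact ⟨Finset.HasAntidiagonal.mem_antidiagonal.2 hsum, hbpos⟩
        · rw [Finset.mem_filter]
          refine ⟨Finset.mem_univ _, ?_⟩
          show l.length = m + 1
          have : c'.blocks.length = m + 2 := hlen
          simp [hldef]; omega
      · apply Composition.ext
        exact hsplit
    · -- values
      intro x hx
      obtain ⟨⟨a, b⟩, c⟩ := x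
      have hab : a + b = k := Finset.HasAntidiagonal.mem_antidiagonal.1
        (Finset.mem_filter.1 (Finset.mem_sigma.1 hx).1).1
      have hbpos : 0 < b := (Finset.mem_filter.1 (Finset.mem_sigma.1 hx).1).2
      have hlen : c.length = m + 1 := (Finset.mem_filter.1 (Finset.mem_sigma.1 hx).2).2
      set c' : Composition k := mkComp hab hbpos c with hc'
      have hlen' : c'.length = m + 2 := by
        show (c.blocks ++ [b]).length = m + 2
        simp [Composition.blocks_length] at hlen ⊢
        omega
      have hsz : ∀ t, t ≤ m + 1 → c'.sizeUpTo t = c.sizeUpTo t := by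
        intro t ht
        show ((c.blocks ++ [b]).take t).sum = (c.blocks.take t).sum
        rw [List.take_append_of_le_length]
        show t ≤ c.length
        omega
      have hszlast : c'.sizeUpTo (m + 1) = a := by
        rw [hsz (m+1) le_rfl]
        have := c.sizeUpTo_length
        rwa [hlen] at this
      have hw : weight c' = weight c * ((a : A) + 1) := by
        rw [weight, weight, hlen', hlen]
        rw [show m + 2 - 1 = m + 1 from rfl, show m + 1 - 1 = m from rfl]
        rw [Finset.prod_range_succ, hszlast]
        congr 1
        apply Finset.prod_congr rfl
        intro j hj
        rw [hsz (j+1) (by have := Finset.mem_range.1 hj; omega)]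
      have hp : prodH h c' = prodH h c * coeff b h := by
        show ((c.blocks ++ [b]).map _).prod = _
        rw [List.map_append, List.prod_append]
        simp [prodH]
      show ((a : A) + 1) * (weight c * prodH h c) * coeff b h = weight c' * prodH h c'
      rw [hw, hp]
      ring

theorem stmt16 [CommRing A] (h : PowerSeries A) (hh : coeff 0 h = 0)
    (n : ℕ) (hn : 1 ≤ n) (k : ℕ) :
    (n ≤ k →
      coeff k (RPS h (n - 1)) =
        ∑ c ∈ Finset.univ.filter (fun c : Composition k => c.length = n),
          weight c * prodH h c) ∧
    (k < n → coeff k (RPS h (n - 1)) = 0) := by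
  constructor
  · intro _
    exact key h hh n hn k
  · intro hk
    rw [key h hh n hn k]
    apply Finset.sum_eq_zero
    intro c hc
    exfalso
    have := c.length_le
    have := (Finset.mem_filter.1 hc).2
    omega
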